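/- Let p be a prime, let F be the algebraic closure of the field with p elements, let G = SL₂(F), and let B ≤ G be the Borel subgroup of upper triangular matrices in G (those g with lower-left entry g₂₁ = 0). Let k be a field and let V = (G/B) →₀ k be the k-vector space with basis the left coset space G/B, on which G acts by left translation of the basis vectors. Then every k-linear endomorphism φ of V satisfying φ(g • v) = g • φ(v) for all g ∈ G and v ∈ V is a scalar: there exists c ∈ k with φ(v) = c • v for all v ∈ V. -/

import Mathlib

open Matrix

/-- The Borel subgroup of upper triangular matrices in `SL₂(R)`. -/
def upperBorel (R : Type*) [CommRing R] : Subgroup (SpecialLinearGroup (Fin 2) R) where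
  carrier := {g | (g : Matrix (Fin 2) (Fin 2) R) 1 0 = 0}
  one_mem' := by
    simp
  mul_mem' := by
    intro a b ha hb
    change (a.1 1 0 = 0) at ha
    change (b.1 1 0 = 0) at hb
    change (a.1 * b.1) 1 0 = 0
    simp only [Matrix.mul_apply, Fin.sum_univ_two]
    rw [ha, hb]; ring
  inv_mem' := by
    intro a ha
    change (a.1 1 0 = 0) at ha
    change (adjugate a.1) 1 0 = 0
    simp only [Matrix.adjugate_fin_two]
    simp [ha]

/-- The standard unipotent element `!![1, t; 0, 1]` of `SL₂`. -/
noncomputable def uni {R : Type*} [CommRing R] (t : R) : SpecialLinearGroup (Fin 2) R :=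
  ⟨!![1, t; 0, 1], by simp [Matrix.det_fin_two]⟩

lemma uni_conj_entry {R : Type*} [CommRing R] (t s : R) (g : SpecialLinearGroup (Fin 2) R) :
    (((uni s * g)⁻¹ * (uni t * g) : SpecialLinearGroup (Fin 2) R) :
        Matrix (Fin 2) (Fin 2) R) 1 0
      = (s - t) * (g : Matrix (Fin 2) (Fin 2) R) 1 0 ^ 2 := by
  have e : (((uni s * g)⁻¹ * (uni t * g) : SpecialLinearGroup (Fin 2) R) : Matrix (Fin 2) (Fin 2) R) = adjugate ((uni s : Matrix (Fin 2) (Fin 2) R) * (g : Matrix (Fin 2) (Fin 2) R)) * ((uni t : Matrix (Fin 2) (Fin 2) R) * (g : Matrix (Fin 2) (Fin 2) R)) := by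
    rw [Matrix.SpecialLinearGroup.coe_mul, Matrix.SpecialLinearGroup.coe_inv, Matrix.SpecialLinearGroup.coe_mul, Matrix.SpecialLinearGroup.coe_mul]
  rw [e]
  simp [Matrix.SpecialLinearGroup.coe_mul, Matrix.SpecialLinearGroup.coe_inv, Matrix.adjugate_fin_two,
    Matrix.mul_apply, Matrix.vecMul, dotProduct, Fin.sum_univ_two, uni]
  ring

lemma uni_mem_upperBorel {R : Type*} [CommRing R] (t : R) : uni t ∈ upperBorel R := by
  show (!![1, t; 0, 1] : Matrix (Fin 2) (Fin 2) R) 1 0 = 0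
  simp

/-- Over an infinite field, every nontrivial `B`-orbit on `G ⧸ B` is infinite for
`G = SL₂`, `B` the upper Borel. -/
lemma orbit_infinite {R : Type*} [Field R] [Infinite R]
    (x : SpecialLinearGroup (Fin 2) R ⧸ upperBorel R) (hx : x ≠ QuotientGroup.mk 1) :
    {y : SpecialLinearGroup (Fin 2) R ⧸ upperBorel R | ∃ b ∈ upperBorel R, b • x = y}.Infinite := by
  obtain ⟨g, rfl⟩ := QuotientGroup.mk_surjective x
  have hc : (g : Matrix (Fin 2) (Fin 2) R) 1 0 ≠ 0 := by
    intro h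
    apply hx
    rw [QuotientGroup.eq]
    show ((g⁻¹ * 1 : SpecialLinearGroup (Fin 2) R) : Matrix (Fin 2) (Fin 2) R) 1 0 = 0
    simp [SpecialLinearGroup.coe_inv, Matrix.adjugate_fin_two, h]
  have hinj : Function.Injective
      (fun t : R => (uni t : SpecialLinearGroup (Fin 2) R) •
        (QuotientGroup.mk g : _ ⧸ upperBorel R)) := by
    intro t s hts
    simp only at hts
    have hts' : (QuotientGroup.mk (uni t * g) : _ ⧸ upperBorel R)
        = QuotientGroup.mk (uni s * g) := hts
    have hB : (uni t * g : SpecialLinearGroup (Fin 2) R)⁻¹ * (uni s * g) ∈ upperBorel R :=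
      QuotientGroup.eq.mp hts'
    have h2 : (((uni t * g)⁻¹ * (uni s * g) : SpecialLinearGroup (Fin 2) R) :
        Matrix (Fin 2) (Fin 2) R) 1 0 = 0 := hB
    rw [uni_conj_entry] at h2
    rcases mul_eq_zero.mp h2 with h | h
    · exact sub_eq_zero.mp h
    · exact absurd (pow_eq_zero_iff (by norm_num) |>.mp h) hc
  apply Set.infinite_of_injective_forall_mem hinj
  intro t
  exact ⟨uni t, uni_mem_upperBorel t, rfl⟩

/-- General form: if every nontrivial `B`-orbit on `G ⧸ B` is infinite, then every
`G`-equivariant endomorphism of `k[G ⧸ B]` is scalar. -/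
theorem aux_scalar {G : Type*} [Group G] (B : Subgroup G) {k : Type*} [Field k]
    (horb : ∀ x : G ⧸ B, x ≠ QuotientGroup.mk 1 →
      {y : G ⧸ B | ∃ b ∈ B, b • x = y}.Infinite)
    (φ : ((G ⧸ B) →₀ k) →ₗ[k] ((G ⧸ B) →₀ k))
    (hφ : ∀ (g : G) (v : (G ⧸ B) →₀ k),
        φ (Finsupp.mapDomain (fun x => g • x) v) =
          Finsupp.mapDomain (fun x => g • x) (φ v)) :
    ∃ c : k, ∀ v, φ v = c • v := by
  classical
  set e : G ⧸ B := QuotientGroup.mk 1 with he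
  set v : (G ⧸ B) →₀ k := φ (Finsupp.single e 1) with hv
  have hfix : ∀ b : G, b ∈ B → Finsupp.mapDomain (fun x => b • x) v = v := by
    intro b hb
    rw [hv, ← hφ b]
    congr 1
    rw [Finsupp.mapDomain_single]
    congr 1
    show (QuotientGroup.mk (b * 1) : G ⧸ B) = QuotientGroup.mk 1
    rw [QuotientGroup.eq]
    simpa using B.inv_mem hb
  have hsupp_inv : ∀ b : G, b ∈ B → ∀ x ∈ v.support, b • x ∈ v.support := by
    intro b hb x hx
    have hinj : Function.Injective (fun x : G ⧸ B => b • x) := MulAction.injective b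
    have h := Finsupp.mapDomain_support_of_injective hinj v
    rw [hfix b hb] at h
    rw [h]
    exact Finset.mem_image_of_mem _ hx
  have hsupp : v.support ⊆ {e} := by
    intro x hx
    simp only [Finset.mem_singleton]
    by_contra hx1
    have hmem : ∀ y ∈ {y : G ⧸ B | ∃ b ∈ B, b • x = y}, y ∈ (v.support : Set (G ⧸ B)) := by
      rintro y ⟨b, hb, rfl⟩
      exact hsupp_inv b hb x hx
    exact ((horb x hx1).mono hmem) v.support.finite_toSet
  obtain ⟨c, hc⟩ : ∃ c : k, v = Finsupp.single e c :=
    ⟨v e, Finsupp.support_subset_singleton.mp hsupp⟩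
  refine ⟨c, ?_⟩
  have hbasis : ∀ x : G ⧸ B, φ (Finsupp.single x 1) = c • Finsupp.single x 1 := by
    intro x
    obtain ⟨g, rfl⟩ := QuotientGroup.mk_surjective x
    have h1 : (Finsupp.single (QuotientGroup.mk g : G ⧸ B) (1 : k))
        = Finsupp.mapDomain (fun x => g • x) (Finsupp.single e 1) := by
      rw [Finsupp.mapDomain_single]
      show (_ : (G ⧸ B) →₀ k) = Finsupp.single (QuotientGroup.mk (g * 1)) 1
      rw [mul_one]
    rw [h1, hφ, ← hv, hc, Finsupp.mapDomain_single, Finsupp.mapDomain_single, Finsupp.smul_single, smul_eq_mul, mul_one]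
  intro w
  have hφeq : φ = c • LinearMap.id := by
    apply Finsupp.lhom_ext
    intro a b
    have hab : (Finsupp.single a b : (G ⧸ B) →₀ k) = b • Finsupp.single a 1 := by
      rw [Finsupp.smul_single, smul_eq_mul, mul_one]
    rw [hab, LinearMap.map_smul, hbasis a]
    simp [smul_smul, mul_comm]
  rw [hφeq]
  rfl

/-- Remark 3.2 / Section 2: for `G = SL₂(𝔽̄_p)`, `B` the upper-triangular Borel,
and `V = k[G/B]` (with `G` acting by left translation of basis vectors), every
`G`-equivariant `k`-linear endomorphism of `V` is a scalar. -/
theorem stmt_9 (p : ℕ) [Fact p.Prime] (k : Type*) [Field k]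
    (φ : ((SpecialLinearGroup (Fin 2) (AlgebraicClosure (ZMod p)) ⧸
            upperBorel (AlgebraicClosure (ZMod p))) →₀ k) →ₗ[k]
         ((SpecialLinearGroup (Fin 2) (AlgebraicClosure (ZMod p)) ⧸
            upperBorel (AlgebraicClosure (ZMod p))) →₀ k))
    (hφ : ∀ (g : SpecialLinearGroup (Fin 2) (AlgebraicClosure (ZMod p)))
        (v : (SpecialLinearGroup (Fin 2) (AlgebraicClosure (ZMod p)) ⧸
            upperBorel (AlgebraicClosure (ZMod p))) →₀ k),
        φ (Finsupp.mapDomain (fun x => g • x) v) =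
          Finsupp.mapDomain (fun x => g • x) (φ v)) :
    ∃ c : k, ∀ v, φ v = c • v :=
  aux_scalar _ (fun x hx => orbit_infinite x hx) φ hφ
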